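/- Suppose Assumption (Ass) holds and that sup_{z ∈ ρ(H₀)} ‖K(z)‖ ≤ c for some c < 1. Then σ(H_V) ⊂ σ(H₀), σ_p(H_V) ∪ σ_r(H_V) ⊂ σ_p(H₀), and σ_c(H₀) ⊂ σ_c(H_V). In particular, if σ(H₀) = σ_c(H₀) then σ(H_V) = σ_c(H_V) = σ(H₀). -/

import Mathlib

open ContinuousLinearMap

noncomputable section

/-- An abstract encoding of the setting of Assumption 1.1 of
Hansmann–Krejčiřík.  The self-adjoint operator `H₀` in the Hilbert space `H`
is encoded through the *bounded* operators
`S = G₀^{-1/2} = (|H₀|+1)^{-1/2}` and `T = H₀ G₀^{-1}`,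
and the relatively bounded factors `A, B` of the perturbation `V = B^*A`
through the bounded operators `a = A G₀^{-1/2}` and `b = B G₀^{-1/2}`. -/
structure BSSetup (H H' : Type*) [NormedAddCommGroup H] [InnerProductSpace ℂ H]
    [CompleteSpace H] [NormedAddCommGroup H'] [InnerProductSpace ℂ H'] [CompleteSpace H'] where
  /-- `S` represents `G₀^{-1/2} = (|H₀|+1)^{-1/2}`. -/
  S : H →L[ℂ] H
  /-- `T` represents `H₀ G₀^{-1}`. -/
  T : H →L[ℂ] H
  /-- `a` represents the bounded operator `A G₀^{-1/2}`. -/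
  a : H →L[ℂ] H'
  /-- `b` represents the bounded operator `B G₀^{-1/2}`. -/
  b : H →L[ℂ] H'
  S_sa : IsSelfAdjoint S
  T_sa : IsSelfAdjoint T
  S_pos : ∀ x : H, 0 ≤ (inner ℂ x (S x) : ℂ).re
  S_inj : Function.Injective S
  S_dense : DenseRange S
  S_norm : ‖S‖ ≤ 1
  comm : S * T = T * S
  /-- `|H₀| G₀^{-1} = 1 - S²`, i.e. `T² = (H₀ G₀^{-1})² = (1-S²)²`. -/
  T_sq : T * T = (1 - S * S) * (1 - S * S)

namespace BSSetup

variable {H H' : Type*} [NormedAddCommGroup H] [InnerProductSpace ℂ H]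
  [CompleteSpace H] [NormedAddCommGroup H'] [InnerProductSpace ℂ H'] [CompleteSpace H']
  (P : BSSetup H H')

/-- The bounded operator `(H₀ - z) G₀^{-1}`. -/
def Tz (z : ℂ) : H →L[ℂ] H := P.T - z • (P.S * P.S)

/-- The resolvent set `ρ(H₀)`:  `z ∈ ρ(H₀)` iff `(H₀ - z)G₀^{-1}` is boundedly
invertible. -/
def res : Set ℂ := {z | IsUnit (P.Tz z)}

/-- The spectrum `σ(H₀)`. -/
def spec : Set ℂ := {z | ¬ IsUnit (P.Tz z)}

/-- The point spectrum `σ_p(H₀)`: eigenvectors of `H₀` are of the form `ψ = G₀^{-1} x`. -/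
def pointSpec : Set ℂ := {z | ∃ x : H, x ≠ 0 ∧ P.Tz z x = 0}

/-- The continuous spectrum `σ_c(H₀)`: `z ∈ σ(H₀)`, `z` is not an eigenvalue and
the range of `H₀ - z` (which equals the range of `(H₀-z)G₀^{-1}`) is dense. -/
def contSpec : Set ℂ :=
  {z | ¬ IsUnit (P.Tz z) ∧ (∀ x : H, P.Tz z x = 0 → x = 0) ∧ DenseRange (P.Tz z)}

/-- The Birman–Schwinger operator
`K(z) = [A G₀^{-1/2}][G₀(H₀ - z)^{-1}][B G₀^{-1/2}]^*`. -/
def K (z : ℂ) : H' →L[ℂ] H' :=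
  P.a ∘L (Ring.inverse (P.Tz z)) ∘L (ContinuousLinearMap.adjoint P.b)

/-- `W = H₀ G₀^{-1} + [B G₀^{-1/2}]^* A G₀^{-1/2}`; the pseudo-Friedrichs extension is
`H_V = G₀^{1/2} W G₀^{1/2}`, i.e. `ψ = S u ∈ Dom(H_V)` iff `W u ∈ Ran S`, and then
`H_V (S u) = y` where `W u = S y`. -/
def W : H →L[ℂ] H := P.T + (ContinuousLinearMap.adjoint P.b) ∘L P.a

/-- The bounded operator `(H₀ - z)G₀^{-1} + [B G₀^{-1/2}]^* A G₀^{-1/2}`,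
representing `(H_V - z)` conjugated with `G₀^{1/2}`. -/
def Wz (z : ℂ) : H →L[ℂ] H := P.W - z • (P.S * P.S)

/-- Assumption 1.1 (Ass): there is `λ₀ ∈ ρ(H₀)` with `-1 ∉ σ(K(λ₀))`. -/
def Ass : Prop := ∃ μ : ℂ, IsUnit (P.Tz μ) ∧ (-1 : ℂ) ∉ spectrum ℂ (P.K μ)

end BSSetup

namespace BSSetup

variable {H H' : Type*} [NormedAddCommGroup H] [InnerProductSpace ℂ H]
  [CompleteSpace H] [NormedAddCommGroup H'] [InnerProductSpace ℂ H'] [CompleteSpace H']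
  (P : BSSetup H H')

/-- `W^* = H₀ G₀^{-1} + [A G₀^{-1/2}]^* B G₀^{-1/2}`, representing the adjoint `H_V^*`. -/
def Wstar : H →L[ℂ] H := P.T + (ContinuousLinearMap.adjoint P.a) ∘L P.b

/-- The spectrum `σ(H_V)`. -/
def specV : Set ℂ := {z | ¬ IsUnit (P.Wz z)}

/-- The point spectrum `σ_p(H_V)`. -/
def pointSpecV : Set ℂ := {z | ∃ u : H, u ≠ 0 ∧ P.Wz z u = 0}

/-- The residual spectrum `σ_r(H_V)`:  `z ∉ σ_p(H_V)` and `z̄ ∈ σ_p(H_V^*)`. -/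
def resSpecV : Set ℂ :=
  {z | (∀ u : H, P.Wz z u = 0 → u = 0) ∧
    ∃ u : H, u ≠ 0 ∧ (P.Wstar - (starRingEnd ℂ z) • (P.S * P.S)) u = 0}

/-- The continuous spectrum `σ_c(H_V)`: `z ∈ σ(H_V)`, `z` is not an eigenvalue of
`H_V`, and the range `{y | ∃ u, S y = (W - z S²) u}` of `H_V - z` is dense. -/
def contSpecV : Set ℂ :=
  {z | ¬ IsUnit (P.Wz z) ∧ (∀ u : H, P.Wz z u = 0 → u = 0) ∧
    Dense {y : H | ∃ u : H, P.S y = P.Wz z u}}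

end BSSetup

namespace BSSetup

variable {H H' : Type*} [NormedAddCommGroup H] [InnerProductSpace ℂ H]
  [CompleteSpace H] [NormedAddCommGroup H'] [InnerProductSpace ℂ H'] [CompleteSpace H']
  (P : BSSetup H H')

/-! ### Basic adjoint and commutation facts -/

lemma adjoint_S : adjoint P.S = P.S := isSelfAdjoint_iff'.mp P.S_sa

lemma adjoint_T : adjoint P.T = P.T := isSelfAdjoint_iff'.mp P.T_sa

lemma adjoint_S2 : adjoint (P.S * P.S) = P.S * P.S := by
  rw [ContinuousLinearMap.mul_def, adjoint_comp, P.adjoint_S, ← ContinuousLinearMap.mul_def]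

lemma commute_S_T : Commute P.S P.T := P.comm

lemma commute_S2_T : Commute (P.S * P.S) P.T := (P.commute_S_T).mul_left (P.commute_S_T)

lemma commute_S2_Tz (z : ℂ) : Commute (P.S * P.S) (P.Tz z) :=
  (P.commute_S2_T).sub_right ((Commute.refl (P.S * P.S)).smul_right z)

lemma commute_Tz_Tz (z w : ℂ) : Commute (P.Tz z) (P.Tz w) := by
  unfold Tz
  exact ((Commute.refl P.T).sub_right ((P.commute_S2_T).symm.smul_right w)).sub_left
    (((P.commute_S2_T).sub_right ((Commute.refl (P.S * P.S)).smul_right w)).smul_left z)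

lemma adjoint_smul_op (w : ℂ) (A : H →L[ℂ] H) :
    adjoint (w • A) = (starRingEnd ℂ w) • adjoint A := by
  exact map_smulₛₗ (ContinuousLinearMap.adjoint :
    (H →L[ℂ] H) ≃ₗᵢ⋆[ℂ] (H →L[ℂ] H)) w A

lemma adjoint_Tz (z : ℂ) : adjoint (P.Tz z) = P.Tz (starRingEnd ℂ z) := by
  unfold Tz
  rw [map_sub, P.adjoint_T, adjoint_smul_op, P.adjoint_S2]

lemma Tz_add (z w : ℂ) : P.Tz (z + w) = P.Tz z - w • (P.S * P.S) := by
  unfold Tz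
  rw [add_smul]
  abel

lemma Wz_eq (z : ℂ) : P.Wz z = P.Tz z + (adjoint P.b) ∘L P.a := by
  unfold Wz W Tz
  abel

lemma Wz_add (z w : ℂ) : P.Wz (z + w) = P.Wz z - w • (P.S * P.S) := by
  unfold Wz
  rw [add_smul]
  abel

lemma adjoint_Wz (z : ℂ) :
    adjoint (P.Wz z) = P.Wstar - (starRingEnd ℂ z) • (P.S * P.S) := by
  unfold Wz W Wstar
  rw [map_sub, map_add, P.adjoint_T, adjoint_smul_op, P.adjoint_S2, adjoint_comp,
    adjoint_adjoint]

/-- move a self-adjoint operator across the inner product -/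
lemma inner_sa_move {A : H →L[ℂ] H} (hA : adjoint A = A) (x y : H) :
    (inner ℂ (A x) y : ℂ) = inner ℂ x (A y) := by
  conv_lhs => rw [← hA]
  exact adjoint_inner_left A y x

/-! ### Invertibility from two-sided lower bounds -/

lemma isUnit_of_antilip (A : H →L[ℂ] H) (k : ℝ) (hk : 0 < k)
    (h1 : ∀ x, k * ‖x‖ ≤ ‖A x‖) (h2 : ∀ x, k * ‖x‖ ≤ ‖adjoint A x‖) :
    IsUnit A := by
  have hb : ∀ x, ‖x‖ ≤ ((k⁻¹).toNNReal : ℝ) * ‖A x‖ := by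
    intro x
    rw [Real.coe_toNNReal _ (by positivity)]
    calc ‖x‖ = k⁻¹ * (k * ‖x‖) := by field_simp
    _ ≤ k⁻¹ * ‖A x‖ := mul_le_mul_of_nonneg_left (h1 x) (by positivity)
  have hanti := A.antilipschitz_of_bound hb
  have hinj : Function.Injective A := hanti.injective
  have hclosed : IsClosed (Set.range A) := hanti.isClosed_range A.uniformContinuous
  have hsurj : Function.Surjective A := by
    have h3 : (LinearMap.range (A : H →ₗ[ℂ] H))ᗮ = ⊥ := by
      rw [Submodule.eq_bot_iff]
      intro y hy
      have h4 : ∀ x, (inner ℂ (A x) y : ℂ) = 0 := fun x =>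
        (Submodule.mem_orthogonal _ y).mp hy (A x) (LinearMap.mem_range_self _ x)
      have h5 : adjoint A y = 0 := by
        have h6 : ∀ x : H, (inner ℂ x (adjoint A y) : ℂ) = 0 := by
          intro x; rw [adjoint_inner_right]; exact h4 x
        have := h6 (adjoint A y)
        rwa [inner_self_eq_zero] at this
      have h7 := h2 y
      rw [h5, norm_zero] at h7
      have : ‖y‖ ≤ 0 := by nlinarith [norm_nonneg y]
      exact norm_le_zero_iff.mp this
    have h8 : Dense ((LinearMap.range (A : H →ₗ[ℂ] H) : Submodule ℂ H) : Set H) := by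
      rw [Submodule.dense_iff_topologicalClosure_eq_top]
      exact Submodule.topologicalClosure_eq_top_iff.mpr h3
    have h9 : Dense (Set.range A) := by
      have : ((LinearMap.range (A : H →ₗ[ℂ] H) : Submodule ℂ H) : Set H) = Set.range A := by
        ext y; simp [LinearMap.mem_range]
      rwa [this] at h8
    intro y
    have h10 : Set.range A = Set.univ := by
      rw [← hclosed.closure_eq, h9.closure_eq]
    have : y ∈ Set.range A := by rw [h10]; trivial
    exact this
  let e := LinearEquiv.ofBijective (A : H →ₗ[ℂ] H) ⟨hinj, hsurj⟩
  have hsymm : ∀ y, A (e.symm y) = y := fun y => e.apply_symm_apply y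
  have hsymm2 : ∀ x, e.symm (A x) = x := fun x => e.symm_apply_apply x
  have hbound : ∀ y : H, ‖(e.symm : H →ₗ[ℂ] H) y‖ ≤ k⁻¹ * ‖y‖ := by
    intro y
    have h11 := h1 (e.symm y)
    rw [hsymm y] at h11
    calc ‖(e.symm : H →ₗ[ℂ] H) y‖ = k⁻¹ * (k * ‖(e.symm y : H)‖) := by field_simp; rfl
    _ ≤ k⁻¹ * ‖y‖ := mul_le_mul_of_nonneg_left h11 (by positivity)
  let B : H →L[ℂ] H := LinearMap.mkContinuous (e.symm : H →ₗ[ℂ] H) k⁻¹ hbound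
  refine ⟨⟨A, B, ?_, ?_⟩, rfl⟩
  · ext y
    show A (B y) = y
    exact hsymm y
  · ext x
    show B (A x) = x
    exact hsymm2 x

/-! ### Lower bound on `Tz w` for non-real `w` -/

lemma norm_T_apply (x : H) : ‖P.T x‖ = ‖x - P.S (P.S x)‖ := by
  have h2 : (inner ℂ (P.T x) (P.T x) : ℂ)
      = inner ℂ ((1 - P.S * P.S) x) ((1 - P.S * P.S) x) := by
    calc (inner ℂ (P.T x) (P.T x) : ℂ) = inner ℂ x (P.T (P.T x)) :=
          inner_sa_move P.adjoint_T x (P.T x)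
    _ = inner ℂ x (((1 - P.S * P.S) * (1 - P.S * P.S)) x) := by
          rw [← ContinuousLinearMap.mul_apply, P.T_sq]
    _ = inner ℂ x ((1 - P.S * P.S) ((1 - P.S * P.S) x)) := by
          rw [ContinuousLinearMap.mul_apply]
    _ = inner ℂ ((1 - P.S * P.S) x) ((1 - P.S * P.S) x) :=
          (inner_sa_move (A := 1 - P.S * P.S)
            (by rw [map_sub, P.adjoint_S2, ← ContinuousLinearMap.star_eq_adjoint,
              star_one]) x _).symm
  have e1 := inner_self_eq_norm_sq_to_K (𝕜 := ℂ) (P.T x)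
  have e2 := inner_self_eq_norm_sq_to_K (𝕜 := ℂ) ((1 - P.S * P.S) x)
  rw [h2, e2] at e1
  have h3' : ‖P.T x‖ ^ 2 = ‖(1 - P.S * P.S) x‖ ^ 2 := by exact_mod_cast e1.symm
  have h4 : (1 - P.S * P.S) x = x - P.S (P.S x) := by
    simp [ContinuousLinearMap.sub_apply, ContinuousLinearMap.mul_apply]
  rw [h4] at h3'
  nlinarith [norm_nonneg (P.T x), norm_nonneg (x - P.S (P.S x)), h3']

lemma norm_S2_apply (x : H) : ‖P.S (P.S x)‖ ≤ ‖P.S x‖ := by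
  calc ‖P.S (P.S x)‖ ≤ ‖P.S‖ * ‖P.S x‖ := P.S.le_opNorm _
  _ ≤ 1 * ‖P.S x‖ := mul_le_mul_of_nonneg_right P.S_norm (norm_nonneg _)
  _ = ‖P.S x‖ := one_mul _

lemma norm_S_apply (x : H) : ‖P.S x‖ ≤ ‖x‖ := by
  calc ‖P.S x‖ ≤ ‖P.S‖ * ‖x‖ := P.S.le_opNorm _
  _ ≤ 1 * ‖x‖ := mul_le_mul_of_nonneg_right P.S_norm (norm_nonneg _)
  _ = ‖x‖ := one_mul _

lemma inner_S2_self (x : H) : (inner ℂ x ((P.S * P.S) x) : ℂ) = (‖P.S x‖ : ℂ) ^ 2 := by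
  rw [ContinuousLinearMap.mul_apply]
  rw [← inner_sa_move P.adjoint_S x (P.S x)]
  exact inner_self_eq_norm_sq_to_K (P.S x)

lemma inner_T_self_real (x : H) : (inner ℂ x (P.T x) : ℂ).im = 0 := by
  rw [← Complex.conj_eq_iff_im]
  calc (starRingEnd ℂ) (inner ℂ x (P.T x) : ℂ) = inner ℂ (P.T x) x := by rw [inner_conj_symm]
  _ = inner ℂ x (P.T x) := inner_sa_move P.adjoint_T x x

lemma Tz_apply (w : ℂ) (x : H) : P.Tz w x = P.T x - w • ((P.S * P.S) x) := by
  simp [Tz, ContinuousLinearMap.sub_apply, ContinuousLinearMap.smul_apply]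

lemma inner_Tz_im (w : ℂ) (x : H) :
    (inner ℂ x (P.Tz w x) : ℂ).im = -(w.im * ‖P.S x‖ ^ 2) := by
  rw [P.Tz_apply w x, inner_sub_right, inner_smul_right, P.inner_S2_self]
  have h1 : ((‖P.S x‖ : ℂ) ^ 2) = ((‖P.S x‖ ^ 2 : ℝ) : ℂ) := by push_cast; ring
  rw [h1]
  rw [Complex.sub_im, P.inner_T_self_real, Complex.mul_im, Complex.ofReal_re,
    Complex.ofReal_im]
  ring

/-- the fundamental lower bound: for any `w`,
`min (1/2) (|Im w| δ(w)²) ‖x‖ ≤ ‖Tz w x‖` with `δ(w) = (2(1+‖w‖))⁻¹`. -/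
lemma norm_Tz_lower (w : ℂ) (x : H) :
    min (1/2 : ℝ) (|w.im| * ((2 * (1 + ‖w‖))⁻¹) ^ 2) * ‖x‖ ≤ ‖P.Tz w x‖ := by
  set δ : ℝ := (2 * (1 + ‖w‖))⁻¹ with hδ
  set k : ℝ := min (1/2 : ℝ) (|w.im| * δ ^ 2) with hkdef
  have hwpos : (0:ℝ) < 1 + ‖w‖ := by positivity
  have hδpos : 0 < δ := by positivity
  by_cases hx : x = 0
  · simp [hx]
  have hxpos : 0 < ‖x‖ := norm_pos_iff.mpr hx
  by_cases hS : ‖P.S x‖ ≤ δ * ‖x‖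
  · -- small `‖Sx‖`: use the `T` part
    have h1 : ‖P.T x‖ ≥ ‖x‖ - ‖P.S x‖ := by
      rw [P.norm_T_apply]
      have := norm_sub_norm_le x (P.S (P.S x))
      have h2 := P.norm_S2_apply x
      linarith
    have h3 : ‖P.Tz w x‖ ≥ ‖P.T x‖ - ‖w‖ * ‖P.S x‖ := by
      rw [P.Tz_apply]
      have h4 := norm_sub_norm_le (P.T x) (w • ((P.S * P.S) x))
      have h5 : ‖w • ((P.S * P.S) x)‖ ≤ ‖w‖ * ‖P.S x‖ := by
        rw [norm_smul]
        have : ‖(P.S * P.S) x‖ ≤ ‖P.S x‖ := by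
          rw [ContinuousLinearMap.mul_apply]; exact P.norm_S2_apply x
        exact mul_le_mul_of_nonneg_left this (norm_nonneg w)
      linarith
    have h6 : ‖P.Tz w x‖ ≥ ‖x‖ - (1 + ‖w‖) * ‖P.S x‖ := by nlinarith [norm_nonneg (P.S x), norm_nonneg w]
    have h7 : (1 + ‖w‖) * (δ * ‖x‖) = ‖x‖ / 2 := by
      rw [hδ]; field_simp
    have h8 : ‖P.Tz w x‖ ≥ ‖x‖ / 2 := by
      have : (1 + ‖w‖) * ‖P.S x‖ ≤ (1 + ‖w‖) * (δ * ‖x‖) :=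
        mul_le_mul_of_nonneg_left hS (le_of_lt hwpos)
      linarith
    have h9 : k ≤ 1/2 := min_le_left _ _
    have h10 : k * ‖x‖ ≤ (1/2) * ‖x‖ := mul_le_mul_of_nonneg_right h9 (norm_nonneg x)
    linarith
  · -- large `‖Sx‖`: use the imaginary part
    push_neg at hS
    have h1 : |(inner ℂ x (P.Tz w x) : ℂ).im| ≤ ‖x‖ * ‖P.Tz w x‖ := by
      calc |(inner ℂ x (P.Tz w x) : ℂ).im| ≤ ‖(inner ℂ x (P.Tz w x) : ℂ)‖ :=
            Complex.abs_im_le_norm _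
      _ = ‖(inner ℂ x (P.Tz w x) : ℂ)‖ := rfl
      _ ≤ ‖x‖ * ‖P.Tz w x‖ := norm_inner_le_norm x _
    rw [P.inner_Tz_im, abs_neg, abs_mul] at h1
    have h2 : |‖P.S x‖ ^ 2| = ‖P.S x‖ ^ 2 := abs_of_nonneg (by positivity)
    rw [h2] at h1
    have h3 : |w.im| * (δ * ‖x‖) ^ 2 ≤ |w.im| * ‖P.S x‖ ^ 2 := by
      apply mul_le_mul_of_nonneg_left _ (abs_nonneg _)
      nlinarith [hS, mul_pos hδpos hxpos]
    have h4 : k ≤ |w.im| * δ^2 := min_le_right _ _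
    have h5 : |w.im| * δ ^ 2 * ‖x‖ * ‖x‖ ≤ ‖x‖ * ‖P.Tz w x‖ := by nlinarith
    have h6 : |w.im| * δ ^ 2 * ‖x‖ ≤ ‖P.Tz w x‖ := by
      by_contra h7
      push_neg at h7
      nlinarith
    calc k * ‖x‖ ≤ |w.im| * δ^2 * ‖x‖ := mul_le_mul_of_nonneg_right h4 (le_of_lt hxpos)
    _ ≤ ‖P.Tz w x‖ := h6

lemma isUnit_Tz_of_im (w : ℂ) (hw : w.im ≠ 0) : IsUnit (P.Tz w) := by
  set k : ℝ := min (1/2 : ℝ) (|w.im| * ((2 * (1 + ‖w‖))⁻¹) ^ 2) with hk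
  have hkpos : 0 < k := by
    apply lt_min (by norm_num)
    have : 0 < |w.im| := abs_pos.mpr hw
    positivity
  apply isUnit_of_antilip _ k hkpos (P.norm_Tz_lower w)
  intro x
  rw [P.adjoint_Tz]
  have h1 := P.norm_Tz_lower ((starRingEnd ℂ) w) x
  have h2 : ‖(starRingEnd ℂ) w‖ = ‖w‖ := RCLike.norm_conj w
  have h3 : |((starRingEnd ℂ) w).im| = |w.im| := by
    simp [Complex.conj_im, abs_neg]
  rw [h2, h3] at h1
  exact h1

/-! ### The `1 + AB` vs `1 + BA` swap lemma -/

lemma isUnit_one_add_swap (A : H →L[ℂ] H') (B : H' →L[ℂ] H)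
    (h : IsUnit ((1 : H' →L[ℂ] H') + A ∘L B)) :
    IsUnit ((1 : H →L[ℂ] H) + B ∘L A) := by
  obtain ⟨X, hX⟩ := h
  have hXi1 : ∀ y, (↑X⁻¹ : H' →L[ℂ] H') (y + A (B y)) = y := by
    intro y
    have h1 : ((↑X⁻¹ : H' →L[ℂ] H') * (↑X : H' →L[ℂ] H')) y = y := by
      rw [X.inv_mul]; rfl
    rw [ContinuousLinearMap.mul_apply, hX] at h1
    simpa [ContinuousLinearMap.add_apply, ContinuousLinearMap.comp_apply,
      ContinuousLinearMap.one_apply] using h1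
  have hXi2 : ∀ y, (↑X⁻¹ : H' →L[ℂ] H') y + A (B ((↑X⁻¹ : H' →L[ℂ] H') y)) = y := by
    intro y
    have h1 : ((↑X : H' →L[ℂ] H') * (↑X⁻¹ : H' →L[ℂ] H')) y = y := by
      rw [X.mul_inv]; rfl
    rw [ContinuousLinearMap.mul_apply, hX] at h1
    simpa [ContinuousLinearMap.add_apply, ContinuousLinearMap.comp_apply,
      ContinuousLinearMap.one_apply] using h1
  refine ⟨⟨(1 : H →L[ℂ] H) + B ∘L A,
    (1 : H →L[ℂ] H) - B ∘L (↑X⁻¹ : H' →L[ℂ] H') ∘L A, ?_, ?_⟩, rfl⟩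
  · -- (1 + B A) ∘ (1 - B X⁻¹ A) = 1
    ext x
    simp only [ContinuousLinearMap.mul_apply, ContinuousLinearMap.add_apply,
      ContinuousLinearMap.sub_apply, ContinuousLinearMap.comp_apply,
      ContinuousLinearMap.one_apply]
    set t := (↑X⁻¹ : H' →L[ℂ] H') (A x) with ht
    have h1 : A (x - B t) = t := by
      have h2 := hXi2 (A x)
      rw [← ht] at h2
      rw [map_sub]
      -- h2 : t + A (B t) = A x
      have h3 : A (B t) = A x - t := eq_sub_of_add_eq' h2
      rw [h3]; abel
    rw [h1]
    abel
  · -- (1 - B X⁻¹ A) ∘ (1 + B A) = 1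
    ext x
    simp only [ContinuousLinearMap.mul_apply, ContinuousLinearMap.add_apply,
      ContinuousLinearMap.sub_apply, ContinuousLinearMap.comp_apply,
      ContinuousLinearMap.one_apply]
    have h1 : A (x + B (A x)) = A x + A (B (A x)) := by rw [map_add]
    rw [h1]
    have h2 : (↑X⁻¹ : H' →L[ℂ] H') (A x + A (B (A x))) = A x := hXi1 (A x)
    rw [h2]
    abel

/-! ### `Tz z` invertible implies `Wz z` invertible -/

lemma isUnit_Wz_of (z : ℂ) (hU : IsUnit (P.Tz z)) (hn : ‖P.K z‖ < 1) :
    IsUnit (P.Wz z) := by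
  obtain ⟨U, hUval⟩ := hU
  have hRinv : Ring.inverse (P.Tz z) = (↑U⁻¹ : H →L[ℂ] H) := by
    rw [← hUval, Ring.inverse_unit]
  have hKz : P.K z = (P.a ∘L (↑U⁻¹ : H →L[ℂ] H)) ∘L adjoint P.b := by
    unfold K
    rw [hRinv, ← ContinuousLinearMap.comp_assoc]
  have h1 : IsUnit ((1 : H' →L[ℂ] H') + (P.a ∘L (↑U⁻¹ : H →L[ℂ] H)) ∘L adjoint P.b) := by
    rw [← hKz]
    have h2 : (1 : H' →L[ℂ] H') + P.K z = 1 - (-(P.K z)) := by rw [sub_neg_eq_add]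
    rw [h2]
    exact (Units.oneSub (-(P.K z)) (by rwa [norm_neg])).isUnit
  have h3 : IsUnit ((1 : H →L[ℂ] H) + adjoint P.b ∘L (P.a ∘L (↑U⁻¹ : H →L[ℂ] H))) :=
    isUnit_one_add_swap (P.a ∘L (↑U⁻¹ : H →L[ℂ] H)) (adjoint P.b) h1
  have hfact : P.Wz z
      = ((1 : H →L[ℂ] H) + adjoint P.b ∘L (P.a ∘L (↑U⁻¹ : H →L[ℂ] H))) * (↑U : H →L[ℂ] H) := by
    ext x
    have hinvU : (↑U⁻¹ : H →L[ℂ] H) ((↑U : H →L[ℂ] H) x) = x := by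
      have : ((↑U⁻¹ : H →L[ℂ] H) * (↑U : H →L[ℂ] H)) x = x := by rw [U.inv_mul]; rfl
      rwa [ContinuousLinearMap.mul_apply] at this
    simp only [ContinuousLinearMap.mul_apply, ContinuousLinearMap.add_apply,
      ContinuousLinearMap.comp_apply, ContinuousLinearMap.one_apply, hinvU]
    rw [P.Wz_eq z]
    simp only [ContinuousLinearMap.add_apply, ContinuousLinearMap.comp_apply, hUval]
  rw [hfact]
  exact h3.mul U.isUnit

/-! ### quantitative estimates for real `z` -/

lemma norm_Tz_shift_sq (z : ℂ) (hz : z.im = 0) (ε : ℝ) (x : H) :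
    ‖P.Tz (z + (ε : ℂ) * Complex.I) x‖ ^ 2
      = ‖P.Tz z x‖ ^ 2 + ε ^ 2 * ‖(P.S * P.S) x‖ ^ 2 := by
  have hconj : (starRingEnd ℂ) z = z := Complex.conj_eq_iff_im.mpr hz
  have hadjN : adjoint (P.Tz z) = P.Tz z := by rw [P.adjoint_Tz, hconj]
  have h1 : P.Tz (z + (ε : ℂ) * Complex.I) x
      = P.Tz z x - ((ε : ℂ) * Complex.I) • ((P.S * P.S) x) := by
    rw [P.Tz_add z ((ε : ℂ) * Complex.I)]
    simp [ContinuousLinearMap.sub_apply, ContinuousLinearMap.smul_apply]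
  rw [h1]
  rw [@norm_sub_sq ℂ]
  have h2 : (inner ℂ (P.Tz z x) ((P.S * P.S) x) : ℂ).im = 0 := by
    rw [← Complex.conj_eq_iff_im]
    calc (starRingEnd ℂ) (inner ℂ (P.Tz z x) ((P.S * P.S) x) : ℂ)
        = inner ℂ ((P.S * P.S) x) (P.Tz z x) := by rw [inner_conj_symm]
    _ = inner ℂ x ((P.S * P.S) (P.Tz z x)) := inner_sa_move P.adjoint_S2 x (P.Tz z x)
    _ = inner ℂ x (P.Tz z ((P.S * P.S) x)) := by
          rw [← ContinuousLinearMap.mul_apply, ← ContinuousLinearMap.mul_apply,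
            (P.commute_S2_Tz z).eq]
    _ = inner ℂ (P.Tz z x) ((P.S * P.S) x) := (inner_sa_move hadjN x _).symm
  have h3 : RCLike.re (inner ℂ (P.Tz z x) (((ε : ℂ) * Complex.I) • ((P.S * P.S) x)) : ℂ) = 0 := by
    rw [inner_smul_right]
    show ((ε : ℂ) * Complex.I * _).re = 0
    rw [Complex.mul_re]
    have hre : ((ε : ℂ) * Complex.I).re = 0 := by simp
    have him : ((ε : ℂ) * Complex.I).im = ε := by simp
    rw [hre, him, h2]
    ring
  rw [h3]
  have h4 : ‖((ε : ℂ) * Complex.I) • ((P.S * P.S) x)‖ ^ 2 = ε ^ 2 * ‖(P.S * P.S) x‖ ^ 2 := by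
    rw [norm_smul]
    have : ‖(ε : ℂ) * Complex.I‖ = |ε| := by
      rw [norm_mul, Complex.norm_I, Complex.norm_real, mul_one, Real.norm_eq_abs]
    rw [this, mul_pow, sq_abs]
  rw [h4]
  ring

lemma denseRange_Tz_sa (z : ℂ) (hz : z.im = 0) (hinj : ∀ x, P.Tz z x = 0 → x = 0) :
    Dense (Set.range (P.Tz z)) := by
  have hconj : (starRingEnd ℂ) z = z := Complex.conj_eq_iff_im.mpr hz
  have hadjN : adjoint (P.Tz z) = P.Tz z := by rw [P.adjoint_Tz, hconj]
  have h3 : (LinearMap.range ((P.Tz z) : H →ₗ[ℂ] H))ᗮ = ⊥ := by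
    rw [Submodule.eq_bot_iff]
    intro y hy
    have h4 : ∀ x, (inner ℂ (P.Tz z x) y : ℂ) = 0 := fun x =>
      (Submodule.mem_orthogonal _ y).mp hy (P.Tz z x) (LinearMap.mem_range_self _ x)
    have h5 : P.Tz z y = 0 := by
      have h6 : ∀ x : H, (inner ℂ x (P.Tz z y) : ℂ) = 0 := by
        intro x
        rw [← inner_sa_move hadjN x y]
        exact h4 x
      have := h6 (P.Tz z y)
      rwa [inner_self_eq_zero] at this
    exact hinj y h5
  have h8 : Dense ((LinearMap.range ((P.Tz z) : H →ₗ[ℂ] H) : Submodule ℂ H) : Set H) := by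
    rw [Submodule.dense_iff_topologicalClosure_eq_top]
    exact Submodule.topologicalClosure_eq_top_iff.mpr h3
  have heq : ((LinearMap.range ((P.Tz z) : H →ₗ[ℂ] H) : Submodule ℂ H) : Set H)
      = Set.range (P.Tz z) := by
    ext y; simp [LinearMap.mem_range]
  rwa [heq] at h8

lemma lemG (z : ℂ) (hz : z.im = 0) (hinj : ∀ x, P.Tz z x = 0 → x = 0) (u : H)
    {δ : ℝ} (hδ : 0 < δ) :
    ∃ ε : ℝ, 0 < ε ∧ ∀ (U : (H →L[ℂ] H)ˣ),
      ((U : H →L[ℂ] H) = P.Tz (z + (ε : ℂ) * Complex.I)) →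
      ε * ‖(↑U⁻¹ : H →L[ℂ] H) ((P.S * P.S) u)‖ ≤ δ := by
  obtain ⟨y, ⟨v, hv⟩, hyd⟩ := ((P.denseRange_Tz_sa z hz hinj).exists_dist_lt u (by linarith : (0:ℝ) < δ/2))
  refine ⟨δ / (2 * (‖v‖ + 1)), by positivity, ?_⟩
  set ε : ℝ := δ / (2 * (‖v‖ + 1)) with hε
  have hεpos : 0 < ε := by positivity
  intro U hU
  have hUinv : ∀ w, (↑U⁻¹ : H →L[ℂ] H) ((↑U : H →L[ℂ] H) w) = w := by
    intro w
    have : ((↑U⁻¹ : H →L[ℂ] H) * (↑U : H →L[ℂ] H)) w = w := by rw [U.inv_mul]; rfl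
    rwa [ContinuousLinearMap.mul_apply] at this
  have hUinv2 : ∀ w, (↑U : H →L[ℂ] H) ((↑U⁻¹ : H →L[ℂ] H) w) = w := by
    intro w
    have : ((↑U : H →L[ℂ] H) * (↑U⁻¹ : H →L[ℂ] H)) w = w := by rw [U.mul_inv]; rfl
    rwa [ContinuousLinearMap.mul_apply] at this
  -- commutation of U⁻¹ with S² and with N
  have hcommS2 : Commute (P.S * P.S) (↑U⁻¹ : H →L[ℂ] H) := by
    apply Commute.units_inv_right
    rw [hU]
    exact P.commute_S2_Tz _
  have hcommN : Commute (P.Tz z) (↑U⁻¹ : H →L[ℂ] H) := by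
    apply Commute.units_inv_right
    rw [hU]
    exact P.commute_Tz_Tz _ _
  -- (i) contraction : ε * ‖U⁻¹ (S² w)‖ ≤ ‖w‖
  have hcontr : ∀ w : H, ε * ‖(↑U⁻¹ : H →L[ℂ] H) ((P.S * P.S) w)‖ ≤ ‖w‖ := by
    intro w
    have h1 : (↑U⁻¹ : H →L[ℂ] H) ((P.S * P.S) w) = (P.S * P.S) ((↑U⁻¹ : H →L[ℂ] H) w) := by
      have h0 := congrArg (fun F : H →L[ℂ] H => F w) hcommS2.eq
      simpa only [ContinuousLinearMap.mul_apply] using h0.symm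
    rw [h1]
    have h2 := P.norm_Tz_shift_sq z hz ε ((↑U⁻¹ : H →L[ℂ] H) w)
    rw [← hU] at h2
    rw [hUinv2 w] at h2
    have h3 : (ε * ‖(P.S * P.S) ((↑U⁻¹ : H →L[ℂ] H) w)‖) ^ 2 ≤ ‖w‖ ^ 2 := by
      rw [mul_pow]
      nlinarith [sq_nonneg ‖P.Tz z ((↑U⁻¹ : H →L[ℂ] H) w)‖]
    have h4 : 0 ≤ ε * ‖(P.S * P.S) ((↑U⁻¹ : H →L[ℂ] H) w)‖ := by positivity
    nlinarith [norm_nonneg w]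
  -- (ii) on the range of N : ε * ‖U⁻¹ (S² (N v))‖ ≤ ε * ‖v‖
  have hrange : ε * ‖(↑U⁻¹ : H →L[ℂ] H) ((P.S * P.S) (P.Tz z v))‖ ≤ ε * ‖v‖ := by
    have e1 : ∀ w, (↑U⁻¹ : H →L[ℂ] H) ((P.S * P.S) w)
        = (P.S * P.S) ((↑U⁻¹ : H →L[ℂ] H) w) := by
      intro w
      have h0 := congrArg (fun F : H →L[ℂ] H => F w) hcommS2.eq
      simpa only [ContinuousLinearMap.mul_apply] using h0.symm
    have e2 : (↑U⁻¹ : H →L[ℂ] H) (P.Tz z v) = P.Tz z ((↑U⁻¹ : H →L[ℂ] H) v) := by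
      have h0 := congrArg (fun F : H →L[ℂ] H => F v) hcommN.eq
      simpa only [ContinuousLinearMap.mul_apply] using h0.symm
    have h1 : (↑U⁻¹ : H →L[ℂ] H) ((P.S * P.S) (P.Tz z v))
        = (P.S * P.S) (P.Tz z ((↑U⁻¹ : H →L[ℂ] H) v)) := by
      rw [e1, e2]
    rw [h1]
    have h2 : ‖(P.S * P.S) (P.Tz z ((↑U⁻¹ : H →L[ℂ] H) v))‖
        ≤ ‖P.Tz z ((↑U⁻¹ : H →L[ℂ] H) v)‖ := by
      rw [ContinuousLinearMap.mul_apply]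
      calc ‖P.S (P.S (P.Tz z ((↑U⁻¹ : H →L[ℂ] H) v)))‖
          ≤ ‖P.S (P.Tz z ((↑U⁻¹ : H →L[ℂ] H) v))‖ := P.norm_S2_apply _
      _ ≤ ‖P.Tz z ((↑U⁻¹ : H →L[ℂ] H) v)‖ := P.norm_S_apply _
    have h3 : ‖P.Tz z ((↑U⁻¹ : H →L[ℂ] H) v)‖ ≤ ‖v‖ := by
      have h4 := P.norm_Tz_shift_sq z hz ε ((↑U⁻¹ : H →L[ℂ] H) v)
      rw [← hU, hUinv2 v] at h4
      nlinarith [norm_nonneg (P.Tz z ((↑U⁻¹ : H →L[ℂ] H) v)), norm_nonneg v,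
        sq_nonneg (ε * ‖(P.S * P.S) ((↑U⁻¹ : H →L[ℂ] H) v)‖),
        sq_nonneg ‖(P.S * P.S) ((↑U⁻¹ : H →L[ℂ] H) v)‖, sq_nonneg ε]
    have h5 : 0 ≤ ε := le_of_lt hεpos
    nlinarith
  -- put the two together
  have hsplit : ε * ‖(↑U⁻¹ : H →L[ℂ] H) ((P.S * P.S) u)‖
      ≤ ε * ‖(↑U⁻¹ : H →L[ℂ] H) ((P.S * P.S) (u - P.Tz z v))‖
        + ε * ‖(↑U⁻¹ : H →L[ℂ] H) ((P.S * P.S) (P.Tz z v))‖ := by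
    have h1 : (P.S * P.S) u = (P.S * P.S) (u - P.Tz z v) + (P.S * P.S) (P.Tz z v) := by
      rw [← map_add]; congr 1; abel
    rw [h1, map_add]
    have h2 := norm_add_le ((↑U⁻¹ : H →L[ℂ] H) ((P.S * P.S) (u - P.Tz z v)))
      ((↑U⁻¹ : H →L[ℂ] H) ((P.S * P.S) (P.Tz z v)))
    nlinarith
  have hfirst : ε * ‖(↑U⁻¹ : H →L[ℂ] H) ((P.S * P.S) (u - P.Tz z v))‖ ≤ δ/2 := by
    calc ε * ‖(↑U⁻¹ : H →L[ℂ] H) ((P.S * P.S) (u - P.Tz z v))‖ ≤ ‖u - P.Tz z v‖ :=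
          hcontr _
    _ ≤ δ/2 := by
          have : dist u (P.Tz z v) < δ/2 := by rwa [← hv] at hyd
          rw [dist_eq_norm] at this
          linarith
  have hsecond : ε * ‖v‖ ≤ δ/2 := by
    have h0 : ε * (‖v‖ + 1) = δ/2 := by
      rw [hε]
      field_simp
    have h0' : ε * ‖v‖ + ε = δ/2 := by rw [← h0]; ring
    linarith
  linarith [hrange]

lemma im_shift (z : ℂ) (hz : z.im = 0) (ε : ℝ) : (z + (ε : ℂ) * Complex.I).im = ε := by
  simp [Complex.add_im, Complex.mul_im, hz]

/-! ### The key eigenvalue lemma (Lemma A) -/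

lemma lemA {c : ℝ} (hc : c < 1) (hK : ∀ w, IsUnit (P.Tz w) → ‖P.K w‖ ≤ c)
    (z : ℂ) (u : H) (hu : u ≠ 0) (hWu : P.Wz z u = 0) :
    ∃ x, x ≠ 0 ∧ P.Tz z x = 0 := by
  by_contra hcon
  push_neg at hcon
  have hinj : ∀ x, P.Tz z x = 0 → x = 0 := by
    intro x hx
    by_contra hx0
    exact (hcon x hx0) hx
  by_cases hz : z.im = 0
  · -- real case
    have hbu : P.Tz z u = -((adjoint P.b) (P.a u)) := by
      have h1 := congrArg (fun (F : H →L[ℂ] H) => F u) (P.Wz_eq z)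
      simp only [ContinuousLinearMap.add_apply, ContinuousLinearMap.comp_apply] at h1
      rw [hWu] at h1
      exact eq_neg_of_add_eq_zero_left h1.symm
    have hau : P.a u = 0 := by
      have key : ∀ δ : ℝ, 0 < δ → (1 - c) * ‖P.a u‖ ≤ (‖P.a‖ + 1) * δ := by
        intro δ hδ
        obtain ⟨ε, hεpos, hG⟩ := P.lemG z hz hinj u hδ
        have hlam : IsUnit (P.Tz (z + (ε:ℂ) * Complex.I)) :=
          P.isUnit_Tz_of_im _ (by rw [im_shift z hz ε]; exact ne_of_gt hεpos)
        obtain ⟨U, hU⟩ := hlam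
        have hGU := hG U hU
        have hUinv : ∀ w, (↑U⁻¹ : H →L[ℂ] H) ((↑U : H →L[ℂ] H) w) = w := by
          intro w
          have : ((↑U⁻¹ : H →L[ℂ] H) * (↑U : H →L[ℂ] H)) w = w := by rw [U.inv_mul]; rfl
          rwa [ContinuousLinearMap.mul_apply] at this
        have hTzu : P.Tz (z + (ε:ℂ) * Complex.I) u
            = -((adjoint P.b) (P.a u)) - ((ε:ℂ) * Complex.I) • ((P.S * P.S) u) := by
          rw [P.Tz_add z ((ε:ℂ) * Complex.I)]
          rw [ContinuousLinearMap.sub_apply, ContinuousLinearMap.smul_apply, hbu]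
        have hueq : u = -((↑U⁻¹ : H →L[ℂ] H) ((adjoint P.b) (P.a u)))
            - ((ε:ℂ) * Complex.I) • ((↑U⁻¹ : H →L[ℂ] H) ((P.S * P.S) u)) := by
          calc u = (↑U⁻¹ : H →L[ℂ] H) ((↑U : H →L[ℂ] H) u) := (hUinv u).symm
          _ = (↑U⁻¹ : H →L[ℂ] H) (P.Tz (z + (ε:ℂ) * Complex.I) u) := by rw [hU]
          _ = (↑U⁻¹ : H →L[ℂ] H) (-((adjoint P.b) (P.a u))
                - ((ε:ℂ) * Complex.I) • ((P.S * P.S) u)) := by rw [hTzu]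
          _ = -((↑U⁻¹ : H →L[ℂ] H) ((adjoint P.b) (P.a u)))
                - ((ε:ℂ) * Complex.I) • ((↑U⁻¹ : H →L[ℂ] H) ((P.S * P.S) u)) := by
                rw [map_sub, map_neg, map_smul]
        have haueq : P.a u = -(P.K (z + (ε:ℂ) * Complex.I) (P.a u))
            - ((ε:ℂ) * Complex.I) • (P.a ((↑U⁻¹ : H →L[ℂ] H) ((P.S * P.S) u))) := by
          conv_lhs => rw [hueq]
          rw [map_sub, map_neg, map_smul]
          have hKapp : P.K (z + (ε:ℂ) * Complex.I) (P.a u)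
              = P.a ((↑U⁻¹ : H →L[ℂ] H) ((adjoint P.b) (P.a u))) := by
            unfold K
            simp only [ContinuousLinearMap.comp_apply]
            rw [← hU, Ring.inverse_unit]
          rw [hKapp]
        have hnorm : ‖P.a u‖ ≤ c * ‖P.a u‖ + (‖P.a‖ + 1) * δ := by
          have h1 : ‖P.a u‖ ≤ ‖P.K (z + (ε:ℂ) * Complex.I) (P.a u)‖
              + ‖((ε:ℂ) * Complex.I) • (P.a ((↑U⁻¹ : H →L[ℂ] H) ((P.S * P.S) u)))‖ := by
            calc ‖P.a u‖ = ‖-(P.K (z + (ε:ℂ) * Complex.I) (P.a u))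
                - ((ε:ℂ) * Complex.I) • (P.a ((↑U⁻¹ : H →L[ℂ] H) ((P.S * P.S) u)))‖ := by
                  rw [← haueq]
            _ = ‖P.K (z + (ε:ℂ) * Complex.I) (P.a u)
                + ((ε:ℂ) * Complex.I) • (P.a ((↑U⁻¹ : H →L[ℂ] H) ((P.S * P.S) u)))‖ := by
                  rw [← norm_neg]; congr 1; abel
            _ ≤ _ := norm_add_le _ _
          have h2 : ‖P.K (z + (ε:ℂ) * Complex.I) (P.a u)‖ ≤ c * ‖P.a u‖ := by
            calc ‖P.K (z + (ε:ℂ) * Complex.I) (P.a u)‖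
                ≤ ‖P.K (z + (ε:ℂ) * Complex.I)‖ * ‖P.a u‖ := ContinuousLinearMap.le_opNorm _ _
            _ ≤ c * ‖P.a u‖ :=
                  mul_le_mul_of_nonneg_right (hK _ ⟨U, hU⟩) (norm_nonneg _)
          have h3 : ‖((ε:ℂ) * Complex.I) • (P.a ((↑U⁻¹ : H →L[ℂ] H) ((P.S * P.S) u)))‖
              ≤ (‖P.a‖ + 1) * δ := by
            rw [norm_smul]
            have h4 : ‖(ε:ℂ) * Complex.I‖ = ε := by
              rw [norm_mul, Complex.norm_I, Complex.norm_real, mul_one, Real.norm_eq_abs,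
                abs_of_pos hεpos]
            rw [h4]
            calc ε * ‖P.a ((↑U⁻¹ : H →L[ℂ] H) ((P.S * P.S) u))‖
                ≤ ε * (‖P.a‖ * ‖(↑U⁻¹ : H →L[ℂ] H) ((P.S * P.S) u)‖) := by
                  apply mul_le_mul_of_nonneg_left (ContinuousLinearMap.le_opNorm _ _)
                    (le_of_lt hεpos)
            _ = ‖P.a‖ * (ε * ‖(↑U⁻¹ : H →L[ℂ] H) ((P.S * P.S) u)‖) := by ring
            _ ≤ ‖P.a‖ * δ := mul_le_mul_of_nonneg_left hGU (norm_nonneg _)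
            _ ≤ (‖P.a‖ + 1) * δ := by nlinarith
          linarith
        linarith
      by_contra hau0
      have hpos : 0 < (1 - c) * ‖P.a u‖ := by
        have := norm_pos_iff.mpr hau0
        nlinarith
      have hδ0pos : 0 < ((1 - c) * ‖P.a u‖) / (2 * (‖P.a‖ + 1)) :=
        div_pos hpos (by positivity)
      have hkey := key _ hδ0pos
      have h2 : (‖P.a‖ + 1) * (((1 - c) * ‖P.a u‖) / (2 * (‖P.a‖ + 1)))
          = ((1 - c) * ‖P.a u‖) / 2 := by
        field_simp
      rw [h2] at hkey
      linarith
    have hTz0 : P.Tz z u = 0 := by rw [hbu, hau, map_zero, neg_zero]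
    exact hu (hinj u hTz0)
  · -- non-real: `Wz z` invertible, contradiction with `u ≠ 0`
    have hT := P.isUnit_Tz_of_im z hz
    have hW := P.isUnit_Wz_of z hT (lt_of_le_of_lt (hK z hT) hc)
    obtain ⟨V, hV⟩ := hW
    have hu0 : u = 0 := by
      have h1 : ((↑V⁻¹ : H →L[ℂ] H) * (↑V : H →L[ℂ] H)) u = u := by rw [V.inv_mul]; rfl
      rw [ContinuousLinearMap.mul_apply, hV, hWu, map_zero] at h1
      exact h1.symm
    exact hu hu0

/-! ### The swapped setup and the residual kernel lemma -/

def swapped : BSSetup H H' :=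
  { S := P.S, T := P.T, a := P.b, b := P.a, S_sa := P.S_sa, T_sa := P.T_sa,
    S_pos := P.S_pos, S_inj := P.S_inj, S_dense := P.S_dense, S_norm := P.S_norm,
    comm := P.comm, T_sq := P.T_sq }

lemma isUnit_Tz_conj {z : ℂ} (h : IsUnit (P.Tz z)) :
    IsUnit (P.Tz (starRingEnd ℂ z)) := by
  have h2 := h.star
  rwa [ContinuousLinearMap.star_eq_adjoint, P.adjoint_Tz] at h2

lemma K_swapped (z : ℂ) (h : IsUnit (P.Tz z)) :
    (P.swapped).K z = adjoint (P.K (starRingEnd ℂ z)) := by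
  have h' : IsUnit (P.Tz (starRingEnd ℂ z)) := P.isUnit_Tz_conj h
  obtain ⟨V, hV⟩ := h'
  have hadjV : adjoint ((V : H →L[ℂ] H)) = P.Tz z := by
    rw [hV, P.adjoint_Tz]
    simp
  have hmul1 : adjoint (↑V⁻¹ : H →L[ℂ] H) * (P.Tz z) = 1 := by
    rw [← hadjV, ContinuousLinearMap.mul_def, ← adjoint_comp, ← ContinuousLinearMap.mul_def,
      V.mul_inv, ← ContinuousLinearMap.star_eq_adjoint, star_one]
  have hmul2 : (P.Tz z) * adjoint (↑V⁻¹ : H →L[ℂ] H) = 1 := by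
    rw [← hadjV, ContinuousLinearMap.mul_def, ← adjoint_comp, ← ContinuousLinearMap.mul_def,
      V.inv_mul, ← ContinuousLinearMap.star_eq_adjoint, star_one]
  have hW : Ring.inverse (P.Tz z) = adjoint (↑V⁻¹ : H →L[ℂ] H) := by
    have : P.Tz z = ((⟨P.Tz z, adjoint (↑V⁻¹ : H →L[ℂ] H), hmul2, hmul1⟩ : (H →L[ℂ] H)ˣ)
        : H →L[ℂ] H) := rfl
    rw [this, Ring.inverse_unit]
    rfl
  have hRinv : Ring.inverse (P.Tz (starRingEnd ℂ z)) = (↑V⁻¹ : H →L[ℂ] H) := by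
    rw [← hV, Ring.inverse_unit]
  show P.b ∘L (Ring.inverse (P.Tz z)) ∘L (adjoint P.a)
      = adjoint (P.a ∘L (Ring.inverse (P.Tz (starRingEnd ℂ z))) ∘L (adjoint P.b))
  rw [hW, hRinv]
  rw [adjoint_comp, adjoint_comp, adjoint_adjoint]
  rw [← ContinuousLinearMap.comp_assoc]

lemma hK_swapped {c : ℝ} (hK : ∀ w, IsUnit (P.Tz w) → ‖P.K w‖ ≤ c) :
    ∀ w, IsUnit ((P.swapped).Tz w) → ‖(P.swapped).K w‖ ≤ c := by
  intro w hw
  have hw' : IsUnit (P.Tz w) := hw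
  rw [P.K_swapped w hw']
  rw [← ContinuousLinearMap.star_eq_adjoint, norm_star]
  exact hK _ (P.isUnit_Tz_conj hw')

lemma resid {c : ℝ} (hc : c < 1) (hK : ∀ w, IsUnit (P.Tz w) → ‖P.K w‖ ≤ c)
    (z : ℂ) (hinj : ∀ x, P.Tz z x = 0 → x = 0) (φ : H)
    (hφ : (P.Wstar - (starRingEnd ℂ z) • (P.S * P.S)) φ = 0) : φ = 0 := by
  by_contra hne
  have hWz' : (P.swapped).Wz (starRingEnd ℂ z) φ = 0 := hφ
  obtain ⟨x, hx0, hx⟩ := (P.swapped).lemA hc (P.hK_swapped hK) (starRingEnd ℂ z) φ hne hWz'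
  have hx' : P.Tz (starRingEnd ℂ z) x = 0 := hx
  have hadj : adjoint (P.Tz (starRingEnd ℂ z)) = P.Tz z := by
    rw [P.adjoint_Tz]
    simp
  have h1 : (inner ℂ (P.Tz z x) (P.Tz z x) : ℂ) = 0 := by
    calc (inner ℂ (P.Tz z x) (P.Tz z x) : ℂ)
        = inner ℂ x (P.Tz (starRingEnd ℂ z) (P.Tz z x)) := by
          rw [← ContinuousLinearMap.adjoint_inner_left (P.Tz (starRingEnd ℂ z))
            (P.Tz z x) x, hadj]
    _ = inner ℂ x ((P.Tz (starRingEnd ℂ z) * P.Tz z) x) := by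
          rw [ContinuousLinearMap.mul_apply]
    _ = inner ℂ x ((P.Tz z * P.Tz (starRingEnd ℂ z)) x) := by
          rw [(P.commute_Tz_Tz (starRingEnd ℂ z) z).eq]
    _ = inner ℂ x (P.Tz z (P.Tz (starRingEnd ℂ z) x)) := by
          rw [ContinuousLinearMap.mul_apply]
    _ = 0 := by rw [hx', map_zero, inner_zero_right]
  have hTzx : P.Tz z x = 0 := inner_self_eq_zero.mp h1
  exact hx0 (hinj x hTzx)

/-! ### Spectral inclusion: `Tz z` not invertible implies `Wz z` not invertible -/

set_option maxHeartbeats 1000000 in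
lemma part3a {c : ℝ} (hc : c < 1) (hK : ∀ w, IsUnit (P.Tz w) → ‖P.K w‖ ≤ c)
    (z : ℂ) (hnT : ¬ IsUnit (P.Tz z)) : ¬ IsUnit (P.Wz z) := by
  intro hW
  obtain ⟨Q, hQ⟩ := hW
  have hz : z.im = 0 := by
    by_contra h
    exact hnT (P.isUnit_Tz_of_im z h)
  have hc0 : 0 ≤ c := le_trans (norm_nonneg _) (hK (z + ((1:ℝ):ℂ) * Complex.I)
    (P.isUnit_Tz_of_im _ (by rw [im_shift z hz]; norm_num)))
  -- the auxiliary continuous family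
  set G : (H →L[ℂ] H) → (H' →L[ℂ] H') :=
    fun X => 1 - P.a ∘L (Ring.inverse X) ∘L adjoint P.b with hGdef
  have hGapp : ∀ Y : H →L[ℂ] H, G Y = 1 - P.a ∘L (Ring.inverse Y) ∘L adjoint P.b :=
    fun Y => by rw [hGdef]
  have hGcont : ContinuousAt G ((Q : H →L[ℂ] H)) := by
    rw [hGdef]
    have h1 : ContinuousAt (fun X : H →L[ℂ] H => Ring.inverse X) ((Q : H →L[ℂ] H)) :=
      NormedRing.inverse_continuousAt Q
    have h2 : Continuous (fun R : H →L[ℂ] H =>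
        (1 : H' →L[ℂ] H') - P.a ∘L R ∘L adjoint P.b) := by
      have h3 : LipschitzWith (‖P.a‖ * ‖adjoint P.b‖).toNNReal
          (fun R : H →L[ℂ] H => (1 : H' →L[ℂ] H') - P.a ∘L R ∘L adjoint P.b) := by
        apply LipschitzWith.of_dist_le_mul
        intro R R'
        rw [dist_eq_norm, dist_eq_norm]
        have h4 : ((1 : H' →L[ℂ] H') - P.a ∘L R ∘L adjoint P.b)
            - ((1 : H' →L[ℂ] H') - P.a ∘L R' ∘L adjoint P.b)
            = P.a ∘L (R' - R) ∘L adjoint P.b := by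
          ext y
          simp only [ContinuousLinearMap.sub_apply, ContinuousLinearMap.comp_apply,
            ContinuousLinearMap.one_apply, map_sub]
          abel
        rw [h4]
        calc ‖P.a ∘L (R' - R) ∘L adjoint P.b‖
            ≤ ‖P.a‖ * ‖(R' - R) ∘L adjoint P.b‖ := ContinuousLinearMap.opNorm_comp_le _ _
        _ ≤ ‖P.a‖ * (‖R' - R‖ * ‖adjoint P.b‖) := by
              apply mul_le_mul_of_nonneg_left (ContinuousLinearMap.opNorm_comp_le _ _)
                (norm_nonneg _)
        _ = (‖P.a‖ * ‖adjoint P.b‖) * ‖R - R'‖ := by rw [norm_sub_rev]; ring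
        _ = ((‖P.a‖ * ‖adjoint P.b‖).toNNReal : ℝ) * ‖R - R'‖ := by
              rw [Real.coe_toNNReal _ (by positivity)]
      exact h3.continuous
    exact h2.continuousAt.comp h1
  set E : ℝ → (H →L[ℂ] H) :=
    fun ε => P.Wz z - ((ε:ℂ) * Complex.I) • (P.S * P.S) with hEdef
  have hEcont : Continuous E := by
    rw [hEdef]
    exact continuous_const.sub ((Complex.continuous_ofReal.mul continuous_const).smul
      continuous_const)
  have hE0 : E 0 = (Q : H →L[ℂ] H) := by
    rw [hEdef]
    simp [hQ]
  have hGcont' : ContinuousAt G (E 0) := by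
    rw [hE0]
    exact hGcont
  have hGE : ContinuousAt (fun ε : ℝ => G (E ε)) 0 :=
    hGcont'.comp hEcont.continuousAt
  obtain ⟨η, hηpos, hη⟩ := Metric.continuousAt_iff.mp hGE ((1 + c)⁻¹) (by positivity)
  set C : H →L[ℂ] H := (↑Q⁻¹ : H →L[ℂ] H) ∘L (P.S * P.S) with hCdef
  set ε : ℝ := min (η/2) ((2 * (‖C‖ + 1))⁻¹) with hεdef
  have hεpos : 0 < ε := lt_min (by linarith) (by positivity)
  have hεC : ε * ‖C‖ < 1 := by
    have h1 : ε ≤ (2 * (‖C‖ + 1))⁻¹ := min_le_right _ _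
    have h2 : (2 * (‖C‖ + 1))⁻¹ * ‖C‖ < 1 := by
      rw [inv_mul_lt_iff₀ (by positivity)]
      nlinarith [norm_nonneg C]
    nlinarith [norm_nonneg C]
  have hnormt : ‖((ε:ℂ) * Complex.I) • C‖ < 1 := by
    rw [norm_smul]
    have h1 : ‖(ε:ℂ) * Complex.I‖ = ε := by
      rw [norm_mul, Complex.norm_I, Complex.norm_real, mul_one, Real.norm_eq_abs,
        abs_of_pos hεpos]
    rw [h1]
    exact hεC
  set M : (H →L[ℂ] H)ˣ := Q * Units.oneSub (((ε:ℂ) * Complex.I) • C) hnormt with hMdef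
  have hM : (↑M : H →L[ℂ] H) = E ε := by
    rw [hMdef, Units.val_mul, Units.val_oneSub, mul_sub, mul_one]
    have h1 : (↑Q : H →L[ℂ] H) * (((ε:ℂ) * Complex.I) • C)
        = ((ε:ℂ) * Complex.I) • (P.S * P.S) := by
      rw [mul_smul_comm]
      congr 1
      rw [hCdef, ← ContinuousLinearMap.mul_def, ← mul_assoc, Q.mul_inv, one_mul]
    rw [h1, hQ, hEdef]
  have hTε : IsUnit (P.Tz (z + (ε:ℂ) * Complex.I)) :=
    P.isUnit_Tz_of_im _ (by rw [im_shift z hz]; exact ne_of_gt hεpos)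
  obtain ⟨U, hU⟩ := hTε
  have hUinv2 : ∀ w, (↑U : H →L[ℂ] H) ((↑U⁻¹ : H →L[ℂ] H) w) = w := by
    intro w
    have : ((↑U : H →L[ℂ] H) * (↑U⁻¹ : H →L[ℂ] H)) w = w := by rw [U.mul_inv]; rfl
    rwa [ContinuousLinearMap.mul_apply] at this
  have hWεapp : ∀ p : H, (E ε) p
      = P.Tz (z + (ε:ℂ) * Complex.I) p + (adjoint P.b) (P.a p) := by
    intro p
    have h1 : E ε = P.Wz (z + (ε:ℂ) * Complex.I) := by
      rw [hEdef, P.Wz_add z ((ε:ℂ) * Complex.I)]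
    rw [h1, P.Wz_eq]
    simp [ContinuousLinearMap.add_apply, ContinuousLinearMap.comp_apply]
  set X : H' →L[ℂ] H' := G (E ε) with hXdef
  have hXeq : X = 1 - P.a ∘L (↑M⁻¹ : H →L[ℂ] H) ∘L adjoint P.b := by
    rw [hXdef, hGapp, ← hM, Ring.inverse_unit]
  set Kε : H' →L[ℂ] H' := P.K (z + (ε:ℂ) * Complex.I) with hKεdef
  have hKεeq : ∀ y, Kε y = P.a ((↑U⁻¹ : H →L[ℂ] H) ((adjoint P.b) y)) := by
    intro y
    rw [hKεdef]
    show (P.a ∘L (Ring.inverse (P.Tz (z + (ε:ℂ) * Complex.I))) ∘L (adjoint P.b)) y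
        = P.a ((↑U⁻¹ : H →L[ℂ] H) ((adjoint P.b) y))
    simp only [ContinuousLinearMap.comp_apply]
    rw [← hU, Ring.inverse_unit]
  have hid1 : X * (1 + Kε) = 1 := by
    ext y
    rw [hXeq]
    simp only [ContinuousLinearMap.mul_apply, ContinuousLinearMap.add_apply,
      ContinuousLinearMap.sub_apply, ContinuousLinearMap.comp_apply,
      ContinuousLinearMap.one_apply]
    rw [hKεeq y]
    set p : H := (↑U⁻¹ : H →L[ℂ] H) ((adjoint P.b) y) with hp
    have hTp : P.Tz (z + (ε:ℂ) * Complex.I) p = (adjoint P.b) y := by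
      rw [hp, ← hU]
      exact hUinv2 _
    have h1 : (E ε) p = (adjoint P.b) y + (adjoint P.b) (P.a p) := by
      rw [hWεapp p, hTp]
    have h2 : (↑M⁻¹ : H →L[ℂ] H) ((adjoint P.b) y + (adjoint P.b) (P.a p)) = p := by
      rw [← h1]
      have h3 : ((↑M⁻¹ : H →L[ℂ] H) * (↑M : H →L[ℂ] H)) p = p := by rw [M.inv_mul]; rfl
      rw [ContinuousLinearMap.mul_apply, hM] at h3
      exact h3
    rw [map_add, h2]
    abel
  have hid2 : (1 + Kε) * X = 1 := by
    ext y
    rw [hXeq]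
    simp only [ContinuousLinearMap.mul_apply, ContinuousLinearMap.add_apply,
      ContinuousLinearMap.sub_apply, ContinuousLinearMap.comp_apply,
      ContinuousLinearMap.one_apply]
    set q : H := (↑M⁻¹ : H →L[ℂ] H) ((adjoint P.b) y) with hq
    rw [hKεeq (y - P.a q)]
    have h2 : (E ε) q = (adjoint P.b) y := by
      have h3 : ((↑M : H →L[ℂ] H) * (↑M⁻¹ : H →L[ℂ] H)) ((adjoint P.b) y)
          = (adjoint P.b) y := by rw [M.mul_inv]; rfl
      rw [ContinuousLinearMap.mul_apply, hM] at h3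
      exact h3
    have h1 : (adjoint P.b) (y - P.a q) = P.Tz (z + (ε:ℂ) * Complex.I) q := by
      rw [map_sub, ← h2, hWεapp q]
      abel
    rw [h1]
    have h3 : (↑U⁻¹ : H →L[ℂ] H) (P.Tz (z + (ε:ℂ) * Complex.I) q) = q := by
      rw [← hU]
      have : ((↑U⁻¹ : H →L[ℂ] H) * (↑U : H →L[ℂ] H)) q = q := by rw [U.inv_mul]; rfl
      rwa [ContinuousLinearMap.mul_apply] at this
    rw [h3]
    abel
  have hXunit : IsUnit X := ⟨⟨X, 1 + Kε, hid1, hid2⟩, rfl⟩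
  have hKεnorm : ‖(1 : H' →L[ℂ] H') + Kε‖ ≤ 1 + c := by
    calc ‖(1 : H' →L[ℂ] H') + Kε‖ ≤ ‖(1 : H' →L[ℂ] H')‖ + ‖Kε‖ := norm_add_le _ _
    _ ≤ 1 + c := by
        have h1 : ‖(1 : H' →L[ℂ] H')‖ ≤ 1 := by
          rw [ContinuousLinearMap.one_def]
          exact ContinuousLinearMap.norm_id_le
        have h2 : ‖Kε‖ ≤ c := hK _ ⟨U, hU⟩
        linarith
  have hdist : ‖X - G ((Q : H →L[ℂ] H))‖ < (1 + c)⁻¹ := by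
    have h1 : dist ε 0 < η := by
      rw [Real.dist_eq, sub_zero, abs_of_pos hεpos]
      have h2 : ε ≤ η/2 := min_le_left _ _
      linarith
    have h2 := hη h1
    rw [dist_eq_norm, hE0] at h2
    rw [hXdef]
    exact h2
  have hGQ : IsUnit (G ((Q : H →L[ℂ] H))) := by
    obtain ⟨Xu, hXu⟩ := hXunit
    have hXuinv : (↑Xu⁻¹ : H' →L[ℂ] H') = 1 + Kε :=
      Units.inv_eq_of_mul_eq_one_right (by rw [hXu]; exact hid1)
    have hsmall : ‖(↑Xu⁻¹ : H' →L[ℂ] H') * (X - G ((Q : H →L[ℂ] H)))‖ < 1 := by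
      calc ‖(↑Xu⁻¹ : H' →L[ℂ] H') * (X - G ((Q : H →L[ℂ] H)))‖
          ≤ ‖(↑Xu⁻¹ : H' →L[ℂ] H')‖ * ‖X - G ((Q : H →L[ℂ] H))‖ := norm_mul_le _ _
      _ ≤ (1 + c) * ‖X - G ((Q : H →L[ℂ] H))‖ := by
            rw [hXuinv]
            exact mul_le_mul_of_nonneg_right hKεnorm (norm_nonneg _)
      _ < (1 + c) * (1 + c)⁻¹ := by
            exact mul_lt_mul_of_pos_left hdist (by positivity)
      _ = 1 := mul_inv_cancel₀ (by positivity)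
    have hfac : G ((Q : H →L[ℂ] H))
        = ↑Xu * (1 - (↑Xu⁻¹ : H' →L[ℂ] H') * (X - G ((Q : H →L[ℂ] H)))) := by
      rw [mul_sub, mul_one, ← mul_assoc, Xu.mul_inv, one_mul, hXu]
      abel
    rw [hfac]
    exact Xu.isUnit.mul (Units.oneSub _ hsmall).isUnit
  have hGQ' : IsUnit ((1 : H' →L[ℂ] H')
      + (P.a ∘L (↑Q⁻¹ : H →L[ℂ] H)) ∘L (-(adjoint P.b))) := by
    have heq : (1 : H' →L[ℂ] H') + (P.a ∘L (↑Q⁻¹ : H →L[ℂ] H)) ∘L (-(adjoint P.b))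
        = G ((Q : H →L[ℂ] H)) := by
      rw [hGapp, Ring.inverse_unit]
      ext y
      simp only [ContinuousLinearMap.add_apply, ContinuousLinearMap.sub_apply,
        ContinuousLinearMap.comp_apply, ContinuousLinearMap.one_apply,
        ContinuousLinearMap.neg_apply, map_neg]
      abel
    rw [heq]
    exact hGQ
  have hswap := isUnit_one_add_swap (P.a ∘L (↑Q⁻¹ : H →L[ℂ] H)) (-(adjoint P.b)) hGQ'
  have hfact2 : P.Tz z = ((1 : H →L[ℂ] H)
      + (-(adjoint P.b)) ∘L (P.a ∘L (↑Q⁻¹ : H →L[ℂ] H))) * (↑Q : H →L[ℂ] H) := by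
    ext x
    simp only [ContinuousLinearMap.mul_apply, ContinuousLinearMap.add_apply,
      ContinuousLinearMap.comp_apply, ContinuousLinearMap.one_apply,
      ContinuousLinearMap.neg_apply]
    have h1 : (↑Q⁻¹ : H →L[ℂ] H) ((↑Q : H →L[ℂ] H) x) = x := by
      have : ((↑Q⁻¹ : H →L[ℂ] H) * (↑Q : H →L[ℂ] H)) x = x := by rw [Q.inv_mul]; rfl
      rwa [ContinuousLinearMap.mul_apply] at this
    rw [h1, hQ]
    have h2 := congrArg (fun F : H →L[ℂ] H => F x) (P.Wz_eq z)
    simp only [ContinuousLinearMap.add_apply, ContinuousLinearMap.comp_apply] at h2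
    rw [h2]
    abel
  exact hnT (by rw [hfact2]; exact hswap.mul Q.isUnit)

/-! ### Density of the range of `H_V - z` -/

lemma part3c {c : ℝ} (hc : c < 1) (hK : ∀ w, IsUnit (P.Tz w) → ‖P.K w‖ ≤ c)
    (z : ℂ) (hz : z.im = 0) (hinj : ∀ x, P.Tz z x = 0 → x = 0) :
    Dense {y : H | ∃ u : H, P.S y = P.Wz z u} := by
  set D : Submodule ℂ H :=
    { carrier := {y : H | ∃ u : H, P.S y = P.Wz z u}
      add_mem' := by
        rintro y₁ y₂ ⟨u₁, h₁⟩ ⟨u₂, h₂⟩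
        exact ⟨u₁ + u₂, by rw [map_add, map_add, h₁, h₂]⟩
      zero_mem' := ⟨0, by rw [map_zero, map_zero]⟩
      smul_mem' := by
        rintro r y ⟨u, h⟩
        exact ⟨r • u, by rw [map_smul, map_smul, h]⟩ } with hDdef
  have hlamT : IsUnit (P.Tz (z + ((1:ℝ):ℂ) * Complex.I)) :=
    P.isUnit_Tz_of_im _ (by rw [im_shift z hz]; norm_num)
  have hlamW : IsUnit (P.Wz (z + ((1:ℝ):ℂ) * Complex.I)) :=
    P.isUnit_Wz_of _ hlamT (lt_of_le_of_lt (hK _ hlamT) hc)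
  obtain ⟨Q, hQ⟩ := hlamW
  have hQinv2 : ∀ w, (↑Q : H →L[ℂ] H) ((↑Q⁻¹ : H →L[ℂ] H) w) = w := by
    intro w
    have : ((↑Q : H →L[ℂ] H) * (↑Q⁻¹ : H →L[ℂ] H)) w = w := by rw [Q.mul_inv]; rfl
    rwa [ContinuousLinearMap.mul_apply] at this
  have hmem : ∀ w : H,
      w + (((1:ℝ):ℂ) * Complex.I) • P.S ((↑Q⁻¹ : H →L[ℂ] H) (P.S w)) ∈ D := by
    intro w
    refine ⟨(↑Q⁻¹ : H →L[ℂ] H) (P.S w), ?_⟩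
    have h1 : P.Wz z ((↑Q⁻¹ : H →L[ℂ] H) (P.S w))
        = P.Wz (z + ((1:ℝ):ℂ) * Complex.I) ((↑Q⁻¹ : H →L[ℂ] H) (P.S w))
          + (((1:ℝ):ℂ) * Complex.I) • ((P.S * P.S) ((↑Q⁻¹ : H →L[ℂ] H) (P.S w))) := by
      have h2 := congrArg (fun F : H →L[ℂ] H => F ((↑Q⁻¹ : H →L[ℂ] H) (P.S w)))
        (P.Wz_add z (((1:ℝ):ℂ) * Complex.I))
      simp only [ContinuousLinearMap.sub_apply, ContinuousLinearMap.smul_apply] at h2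
      rw [h2]
      abel
    calc P.S (w + (((1:ℝ):ℂ) * Complex.I) • P.S ((↑Q⁻¹ : H →L[ℂ] H) (P.S w)))
        = P.S w + (((1:ℝ):ℂ) * Complex.I)
            • ((P.S * P.S) ((↑Q⁻¹ : H →L[ℂ] H) (P.S w))) := by
          rw [map_add, map_smul, ContinuousLinearMap.mul_apply]
    _ = P.Wz (z + ((1:ℝ):ℂ) * Complex.I) ((↑Q⁻¹ : H →L[ℂ] H) (P.S w))
          + (((1:ℝ):ℂ) * Complex.I) • ((P.S * P.S) ((↑Q⁻¹ : H →L[ℂ] H) (P.S w))) := by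
          rw [← hQ, hQinv2]
    _ = P.Wz z ((↑Q⁻¹ : H →L[ℂ] H) (P.S w)) := h1.symm
  have horth : Dᗮ = ⊥ := by
    rw [Submodule.eq_bot_iff]
    intro ψ hψ
    have hψ' : ∀ w : H,
        (inner ℂ (w + (((1:ℝ):ℂ) * Complex.I) • P.S ((↑Q⁻¹ : H →L[ℂ] H) (P.S w))) ψ : ℂ)
          = 0 :=
      fun w => (Submodule.mem_orthogonal D ψ).mp hψ _ (hmem w)
    have hkey : ψ = (((1:ℝ):ℂ) * Complex.I)
        • P.S (adjoint (↑Q⁻¹ : H →L[ℂ] H) (P.S ψ)) := by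
      apply ext_inner_left ℂ
      intro w
      have h1 := hψ' w
      rw [inner_add_left, inner_smul_left] at h1
      have h2 : (inner ℂ (P.S ((↑Q⁻¹ : H →L[ℂ] H) (P.S w))) ψ : ℂ)
          = inner ℂ w (P.S (adjoint (↑Q⁻¹ : H →L[ℂ] H) (P.S ψ))) := by
        calc (inner ℂ (P.S ((↑Q⁻¹ : H →L[ℂ] H) (P.S w))) ψ : ℂ)
            = inner ℂ ((↑Q⁻¹ : H →L[ℂ] H) (P.S w)) (P.S ψ) :=
              inner_sa_move P.adjoint_S _ _
        _ = inner ℂ (P.S w) (adjoint (↑Q⁻¹ : H →L[ℂ] H) (P.S ψ)) :=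
              (adjoint_inner_right _ _ _).symm
        _ = inner ℂ w (P.S (adjoint (↑Q⁻¹ : H →L[ℂ] H) (P.S ψ))) :=
              inner_sa_move P.adjoint_S _ _
      rw [h2] at h1
      rw [inner_smul_right]
      have h3 : (starRingEnd ℂ) (((1:ℝ):ℂ) * Complex.I) = -(((1:ℝ):ℂ) * Complex.I) := by
        rw [map_mul, Complex.conj_I]
        simp
      rw [h3] at h1
      linear_combination h1
    have hadjQ : ∀ v, adjoint (↑Q : H →L[ℂ] H) (adjoint (↑Q⁻¹ : H →L[ℂ] H) v) = v := by
      intro v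
      have h1 : adjoint (↑Q : H →L[ℂ] H) ∘L adjoint (↑Q⁻¹ : H →L[ℂ] H) = 1 := by
        rw [← adjoint_comp, ← ContinuousLinearMap.mul_def, Q.inv_mul,
          ← ContinuousLinearMap.star_eq_adjoint, star_one]
      have h2 := congrArg (fun F : H →L[ℂ] H => F v) h1
      simpa [ContinuousLinearMap.comp_apply, ContinuousLinearMap.one_apply] using h2
    obtain ⟨φ, hψφ, hφeq⟩ : ∃ φ : H, ψ = P.S φ ∧ adjoint (↑Q : H →L[ℂ] H) φ
        = (((1:ℝ):ℂ) * Complex.I) • ((P.S * P.S) φ) := by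
      refine ⟨(((1:ℝ):ℂ) * Complex.I) • adjoint (↑Q⁻¹ : H →L[ℂ] H) (P.S ψ), ?_, ?_⟩
      · rw [map_smul]
        exact hkey
      · rw [map_smul, hadjQ]
        congr 1
        conv_lhs => rw [hkey]
        simp only [map_smul, ContinuousLinearMap.mul_apply]
    have hWsφ : (P.Wstar - (starRingEnd ℂ) z • (P.S * P.S)) φ = 0 := by
      have h1 : adjoint (↑Q : H →L[ℂ] H)
          = P.Wstar - (starRingEnd ℂ) (z + ((1:ℝ):ℂ) * Complex.I) • (P.S * P.S) := by
        rw [hQ, P.adjoint_Wz]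
      rw [h1] at hφeq
      have h2 : (starRingEnd ℂ) (z + ((1:ℝ):ℂ) * Complex.I)
          = (starRingEnd ℂ) z - ((1:ℝ):ℂ) * Complex.I := by
        rw [map_add, map_mul, Complex.conj_I]
        simp
        ring
      rw [h2] at hφeq
      have h5 : (P.Wstar - ((starRingEnd ℂ) z - ((1:ℝ):ℂ) * Complex.I) • (P.S * P.S))
          = (P.Wstar - (starRingEnd ℂ) z • (P.S * P.S))
            + (((1:ℝ):ℂ) * Complex.I) • (P.S * P.S) := by
        rw [sub_smul]
        abel
      rw [h5, ContinuousLinearMap.add_apply, ContinuousLinearMap.smul_apply] at hφeq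
      exact add_eq_right.mp hφeq
    have hφ0 : φ = 0 := P.resid hc hK z hinj φ hWsφ
    rw [hψφ, hφ0, map_zero]
  have hdense : Dense (D : Set H) := by
    rw [Submodule.dense_iff_topologicalClosure_eq_top]
    exact Submodule.topologicalClosure_eq_top_iff.mpr horth
  exact hdense

end BSSetup
/-- Theorem 1.6.  Under Assumption (Ass), if
`sup_{z ∈ ρ(H₀)} ‖K(z)‖ ≤ c` for some `c < 1`, then `σ(H_V) ⊆ σ(H₀)`,
`σ_p(H_V) ∪ σ_r(H_V) ⊆ σ_p(H₀)` and `σ_c(H₀) ⊆ σ_c(H_V)`.  In particular, if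
`σ(H₀) = σ_c(H₀)` then `σ(H_V) = σ_c(H_V) = σ(H₀)`. -/
theorem BSSetup.spectral_stability
    {H H' : Type*} [NormedAddCommGroup H] [InnerProductSpace ℂ H]
    [CompleteSpace H] [NormedAddCommGroup H'] [InnerProductSpace ℂ H'] [CompleteSpace H']
    (P : BSSetup H H') (hAss : P.Ass) (c : ℝ) (hc : c < 1)
    (hK : ∀ z : ℂ, IsUnit (P.Tz z) → ‖P.K z‖ ≤ c) :
    P.specV ⊆ P.spec ∧
    P.pointSpecV ∪ P.resSpecV ⊆ P.pointSpec ∧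
    P.contSpec ⊆ P.contSpecV ∧
    (P.spec = P.contSpec → P.specV = P.contSpecV ∧ P.contSpecV = P.spec) := by
  have part1 : P.specV ⊆ P.spec := by
    intro z hz
    show ¬ IsUnit (P.Tz z)
    intro hT
    exact hz (P.isUnit_Wz_of z hT (lt_of_le_of_lt (hK z hT) hc))
  have part2 : P.pointSpecV ∪ P.resSpecV ⊆ P.pointSpec := by
    rintro z (⟨u, hu, hWu⟩ | ⟨hinj', u, hu, hWsu⟩)
    · exact P.lemA hc hK z u hu hWu
    · by_contra h
      have hinj : ∀ x, P.Tz z x = 0 → x = 0 := by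
        intro x hx
        by_contra hx0
        exact h ⟨x, hx0, hx⟩
      exact hu (P.resid hc hK z hinj u hWsu)
  have part3 : P.contSpec ⊆ P.contSpecV := by
    rintro z ⟨hnT, hinjT, -⟩
    have hz : z.im = 0 := by
      by_contra h
      exact hnT (P.isUnit_Tz_of_im z h)
    refine ⟨P.part3a hc hK z hnT, ?_, P.part3c hc hK z hz hinjT⟩
    intro u hWu
    by_contra hu0
    obtain ⟨x, hx0, hx⟩ := P.lemA hc hK z u hu0 hWu
    exact hx0 (hinjT x hx)
  refine ⟨part1, part2, part3, ?_⟩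
  intro hspec
  have hsub1 : P.contSpecV ⊆ P.specV := fun z hz => hz.1
  have e1 : P.specV = P.contSpecV := by
    apply Set.Subset.antisymm
    · intro z hz
      have h1 := part1 hz
      rw [hspec] at h1
      exact part3 h1
    · exact hsub1
  have e2 : P.contSpecV = P.spec := by
    apply Set.Subset.antisymm
    · exact fun z hz => part1 (hsub1 hz)
    · intro z hz
      rw [hspec] at hz
      exact part3 hz
  exact ⟨e1, e2⟩
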